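/- Let L be a symmetric Latin square of order n, and let Γ be its rrs-autotopism group. Then the number of isomorphism classes of symmetric Latin squares rrs-isotopic to L equals (1/|Γ|) · Σ_{(α,α,β)∈Γ} ψ(α,β), where ψ(α,β) = |{σ ∈ S_n : σ⁻¹ασ = β}| (equivalently, ψ(α,β) = ∏_{i=1}^{k} (n_i)! · c_i^{n_i} when α and β have the same cycle structure c₁^{n₁}⋯c_k^{n_k}, and ψ(α,β) = 0 when α and β are not conjugate in S_n). -/

import Mathlib

/-- A Latin square of order `n`: each row and each column is a bijection. -/
def IsLatin {n : ℕ} (L : Fin n → Fin n → Fin n) : Prop :=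
  (∀ i, Function.Bijective (L i)) ∧ (∀ j, Function.Bijective fun i => L i j)

/-- `L` is symmetric: `L(i,j) = L(j,i)`. -/
def IsSymmetric {n : ℕ} (L : Fin n → Fin n → Fin n) : Prop :=
  ∀ i j, L i j = L j i

/-- `L` is semisymmetric: `L(i,j) = k → L(j,k) = i`. -/
def IsSemisymmetric {n : ℕ} (L : Fin n → Fin n → Fin n) : Prop :=
  ∀ i j, L j (L i j) = i

/-- Totally symmetric: symmetric and semisymmetric. -/
def IsTotallySymmetric {n : ℕ} (L : Fin n → Fin n → Fin n) : Prop :=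
  IsSymmetric L ∧ IsSemisymmetric L

/-- Reduced: the first row and first column are in natural order. -/
def IsReducedLS {n : ℕ} (L : Fin n → Fin n → Fin n) : Prop :=
  ∀ i j : Fin n, ((i : ℕ) = 0 → L i j = j) ∧ ((j : ℕ) = 0 → L i j = i)

/-- Idempotent: `L(i,i) = i` for all `i`. -/
def IsIdempotent {n : ℕ} (L : Fin n → Fin n → Fin n) : Prop :=
  ∀ i, L i i = i

/-- Unipotent: all diagonal entries are equal. -/
def IsUnipotent {n : ℕ} (L : Fin n → Fin n → Fin n) : Prop :=
  ∀ i j, L i i = L j j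

/-- `B` is isotopic to `A`: `B = A(α,β,γ)`. -/
def Isotopic {n : ℕ} (A B : Fin n → Fin n → Fin n) : Prop :=
  ∃ α β γ : Equiv.Perm (Fin n), ∀ i j, B (α i) (β j) = γ (A i j)

/-- `B` is rrs-isotopic to `A`: `B = A(α,α,γ)`. -/
def RrsIsotopic {n : ℕ} (A B : Fin n → Fin n → Fin n) : Prop :=
  ∃ α γ : Equiv.Perm (Fin n), ∀ i j, B (α i) (α j) = γ (A i j)

/-- `B` is isomorphic to `A`: `B = A(α,α,α)`. -/
def Isomorphic {n : ℕ} (A B : Fin n → Fin n → Fin n) : Prop :=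
  ∃ α : Equiv.Perm (Fin n), ∀ i j, B (α i) (α j) = α (A i j)

/-- `B` is one of the six conjugates of `A`, obtained by uniformly permuting
the coordinates of the triples `(i, j, A i j)`. -/
def IsConjugate {n : ℕ} (A B : Fin n → Fin n → Fin n) : Prop :=
  (∀ i j, B i j = A i j) ∨ (∀ i j, B j i = A i j) ∨
  (∀ i j, B (A i j) j = i) ∨ (∀ i j, B i (A i j) = j) ∨
  (∀ i j, B j (A i j) = i) ∨ (∀ i j, B (A i j) i = j)

/-- `B` is paratopic to `A`: `B` is isotopic to some conjugate of `A`. -/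
def Paratopic {n : ℕ} (A B : Fin n → Fin n → Fin n) : Prop :=
  ∃ C : Fin n → Fin n → Fin n, IsConjugate A C ∧ Isotopic C B

/-- The rrs-autotopism group of `L`, recorded as the set of pairs `(α, β)` such
that `(α, α, β)` is an autotopism of `L`. -/
def RrsAutotopisms {n : ℕ} (L : Fin n → Fin n → Fin n) :
    Set (Equiv.Perm (Fin n) × Equiv.Perm (Fin n)) :=
  {p | ∀ i j, L (p.1 i) (p.1 j) = p.2 (L i j)}

/-- `ψ(α,β)`: the number of `σ ∈ S_n` with `σ⁻¹ασ = β`. -/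
noncomputable def psi {n : ℕ} (α β : Equiv.Perm (Fin n)) : ℕ :=
  Nat.card {σ : Equiv.Perm (Fin n) // σ⁻¹ * α * σ = β}

open Equiv MulAction

theorem Equiv.Perm.apply_inv_self {α : Type*} (f : Equiv.Perm α) (x : α) : f (f⁻¹ x) = x :=
  f.apply_symm_apply x

theorem Equiv.Perm.inv_apply_self {α : Type*} (f : Equiv.Perm α) (x : α) : f⁻¹ (f x) = x :=
  f.symm_apply_apply x

/-- The rrs-autotopism group as a subgroup of `Perm (Fin n) × Perm (Fin n)`. -/
def GammaSub {n : ℕ} (L : Fin n → Fin n → Fin n) :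
    Subgroup (Equiv.Perm (Fin n) × Equiv.Perm (Fin n)) where
  carrier := RrsAutotopisms L
  one_mem' := fun i j => rfl
  mul_mem' := by
    intro p q hp hq i j
    have h1 := hp (q.1 i) (q.1 j)
    have h2 := hq i j
    simp only [Prod.fst_mul, Prod.snd_mul, Equiv.Perm.mul_apply]
    rw [h1, h2]
  inv_mem' := by
    intro p hp i j
    have h := hp (p.1⁻¹ i) (p.1⁻¹ j)
    rw [Equiv.Perm.apply_inv_self, Equiv.Perm.apply_inv_self] at h
    simp only [Prod.fst_inv, Prod.snd_inv]
    rw [h, Equiv.Perm.inv_apply_self]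

/-- The action of `Γ` on `S_n` given by `(α,β) • τ = β τ α⁻¹`. -/
instance gammaAction {n : ℕ} (L : Fin n → Fin n → Fin n) :
    MulAction ↥(GammaSub L) (Equiv.Perm (Fin n)) where
  smul p τ := p.1.2 * τ * p.1.1⁻¹
  one_smul τ := by
    show (1 : ↥(GammaSub L)).1.2 * τ * (1 : ↥(GammaSub L)).1.1⁻¹ = τ
    simp
  mul_smul p q τ := by
    show (p * q).1.2 * τ * (p * q).1.1⁻¹ =
      p.1.2 * (q.1.2 * τ * q.1.1⁻¹) * p.1.1⁻¹
    simp [mul_assoc]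

lemma gamma_smul_def {n : ℕ} (L : Fin n → Fin n → Fin n) (p : ↥(GammaSub L))
    (τ : Equiv.Perm (Fin n)) : p • τ = p.1.2 * τ * p.1.1⁻¹ := rfl

/-- The square `L^{(τ,1)}` as an element of the subtype of symmetric Latin squares
rrs-isotopic to `L`. -/
def fsq {n : ℕ} (L : Fin n → Fin n → Fin n) (hL : IsLatin L) (hs : IsSymmetric L)
    (τ : Equiv.Perm (Fin n)) :
    {M : Fin n → Fin n → Fin n // IsLatin M ∧ IsSymmetric M ∧ RrsIsotopic L M} :=
  ⟨fun i j => L (τ⁻¹ i) (τ⁻¹ j),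
    ⟨fun i => (hL.1 (τ⁻¹ i)).comp τ⁻¹.bijective,
     fun j => (hL.2 (τ⁻¹ j)).comp τ⁻¹.bijective⟩,
    fun i j => hs _ _,
    τ, 1, fun i j => by simp⟩

/-- Key well-definedness lemma: two rrs-isotopy witnesses for the same square give
`Γ`-equivalent invariants. -/
lemma witness_orbit {n : ℕ} (L : Fin n → Fin n → Fin n)
    {M : Fin n → Fin n → Fin n} {α γ α' γ' : Equiv.Perm (Fin n)}
    (h : ∀ i j, M (α i) (α j) = γ (L i j))
    (h' : ∀ i j, M (α' i) (α' j) = γ' (L i j)) :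
    ∃ p : ↥(GammaSub L), p • (γ'⁻¹ * α') = γ⁻¹ * α := by
  have hmem : (α⁻¹ * α', γ⁻¹ * γ') ∈ GammaSub L := by
    intro i j
    have h1 := h (α⁻¹ (α' i)) (α⁻¹ (α' j))
    rw [Equiv.Perm.apply_inv_self, Equiv.Perm.apply_inv_self, h' i j] at h1
    simp only [Equiv.Perm.mul_apply]
    rw [h1, Equiv.Perm.inv_apply_self]
  refine ⟨⟨(α⁻¹ * α', γ⁻¹ * γ'), hmem⟩, ?_⟩
  show (γ⁻¹ * γ') * (γ'⁻¹ * α') * (α⁻¹ * α')⁻¹ = γ⁻¹ * α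
  group

/-- The chosen invariant `γ⁻¹α` of a square rrs-isotopic to `L`. -/
noncomputable def tauOf {n : ℕ} (L : Fin n → Fin n → Fin n)
    (M : {M : Fin n → Fin n → Fin n // IsLatin M ∧ IsSymmetric M ∧ RrsIsotopic L M}) :
    Equiv.Perm (Fin n) :=
  (M.2.2.2.choose_spec.choose)⁻¹ * M.2.2.2.choose

lemma tauOf_spec {n : ℕ} (L : Fin n → Fin n → Fin n)
    (M : {M : Fin n → Fin n → Fin n // IsLatin M ∧ IsSymmetric M ∧ RrsIsotopic L M})
    {α γ : Equiv.Perm (Fin n)} (h : ∀ i j, M.1 (α i) (α j) = γ (L i j)) :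
    (Quotient.mk (orbitRel ↥(GammaSub L) (Equiv.Perm (Fin n))) (tauOf L M)) =
      Quotient.mk _ (γ⁻¹ * α) := by
  obtain ⟨p, hp⟩ := witness_orbit L M.2.2.2.choose_spec.choose_spec h
  exact Quotient.sound (mem_orbit_iff.mpr ⟨p, hp⟩)

/-- The main bijection: isomorphism classes of symmetric Latin squares rrs-isotopic
to `L` correspond to orbits of the `Γ`-action on `S_n`. -/
noncomputable def mainEquiv {n : ℕ} (L : Fin n → Fin n → Fin n)
    (hL : IsLatin L) (hs : IsSymmetric L) :
    Quot (fun A B : {M : Fin n → Fin n → Fin n //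
        IsLatin M ∧ IsSymmetric M ∧ RrsIsotopic L M} => Isomorphic A.1 B.1) ≃
    Quotient (orbitRel ↥(GammaSub L) (Equiv.Perm (Fin n))) where
  toFun := Quot.lift (fun M => Quotient.mk _ (tauOf L M)) (by
    rintro A B ⟨σ, hσ⟩
    obtain ⟨α, γ, hA⟩ := A.2.2.2
    have hB : ∀ i j, B.1 ((σ * α) i) ((σ * α) j) = (σ * γ) (L i j) := by
      intro i j
      simp only [Equiv.Perm.mul_apply]
      rw [← hA i j, hσ]
    rw [tauOf_spec L A hA, tauOf_spec L B hB]
    congr 1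
    group)
  invFun := Quotient.lift (fun τ => Quot.mk _ (fsq L hL hs τ)) (by
    intro τ τ' hrel
    obtain ⟨p, hp⟩ := mem_orbit_iff.mp hrel
    rw [gamma_smul_def] at hp
    obtain ⟨⟨a, c⟩, hmem⟩ := p
    simp only at hp
    refine (Quot.sound ⟨c, fun i j => ?_⟩).symm
    show L (τ⁻¹ (c i)) (τ⁻¹ (c j)) = c (L (τ'⁻¹ i) (τ'⁻¹ j))
    have hτ : τ⁻¹ = a * τ'⁻¹ * c⁻¹ := by rw [← hp]; group
    rw [hτ]
    simp only [Equiv.Perm.mul_apply, Equiv.Perm.inv_apply_self]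
    exact hmem (τ'⁻¹ i) (τ'⁻¹ j))
  left_inv := by
    refine Quot.ind (fun M => ?_)
    obtain ⟨α, γ, hA⟩ := M.2.2.2
    simp only [Quot.lift]
    rw [tauOf_spec L M hA]
    show Quot.mk _ (fsq L hL hs (γ⁻¹ * α)) = Quot.mk _ M
    refine Quot.sound ⟨γ, fun i j => ?_⟩
    show M.1 (γ i) (γ j) = γ (L ((γ⁻¹ * α)⁻¹ i) ((γ⁻¹ * α)⁻¹ j))
    have h1 := hA (α⁻¹ (γ i)) (α⁻¹ (γ j))
    rw [Equiv.Perm.apply_inv_self, Equiv.Perm.apply_inv_self] at h1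
    rw [h1]
    congr 1 <;> simp [mul_inv_rev]
  right_inv := by
    refine Quotient.ind (fun τ => ?_)
    show Quotient.mk _ (tauOf L (fsq L hL hs τ)) = _
    have hw : ∀ i j, (fsq L hL hs τ).1 (τ i) (τ j) = (1 : Equiv.Perm (Fin n)) (L i j) := by
      intro i j; simp [fsq]
    rw [tauOf_spec L _ hw]
    congr 1

lemma conj_iff {n : ℕ} (α β σ : Equiv.Perm (Fin n)) :
    σ⁻¹ * α * σ = β ↔ β * σ⁻¹ * α⁻¹ = σ⁻¹ := by
  constructor
  · intro h; subst h; group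
  · intro h; rw [← h]; group

theorem stmt6 {n : ℕ} (L : Fin n → Fin n → Fin n)
    (hL : IsLatin L) (hs : IsSymmetric L) :
    Nat.card (Quot (fun A B : {M : Fin n → Fin n → Fin n //
        IsLatin M ∧ IsSymmetric M ∧ RrsIsotopic L M} => Isomorphic A.1 B.1)) *
      Nat.card (RrsAutotopisms L) =
    ∑ᶠ p ∈ RrsAutotopisms L, psi p.1 p.2 := by
  classical
  letI : Fintype ↥(GammaSub L) := Fintype.ofFinite _
  letI : ∀ p : ↥(GammaSub L), Fintype (MulAction.fixedBy (Equiv.Perm (Fin n)) p) :=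
    fun p => Fintype.ofFinite _
  letI : Fintype (Quotient (MulAction.orbitRel ↥(GammaSub L) (Equiv.Perm (Fin n)))) :=
    Fintype.ofFinite _
  have burnside := MulAction.sum_card_fixedBy_eq_card_orbits_mul_card_group
    (↥(GammaSub L)) (Equiv.Perm (Fin n))
  have h1 : Nat.card (Quot (fun A B : {M : Fin n → Fin n → Fin n //
        IsLatin M ∧ IsSymmetric M ∧ RrsIsotopic L M} => Isomorphic A.1 B.1)) =
      Fintype.card (Quotient (MulAction.orbitRel ↥(GammaSub L) (Equiv.Perm (Fin n)))) := by
    rw [Nat.card_congr (mainEquiv L hL hs), Nat.card_eq_fintype_card]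
  have h2 : Nat.card (RrsAutotopisms L) = Fintype.card ↥(GammaSub L) := by
    rw [← Nat.card_eq_fintype_card]
    exact Nat.card_congr (Equiv.subtypeEquivRight fun x => Iff.rfl)
  have hpsi : ∀ p : ↥(GammaSub L), psi p.1.1 p.1.2 =
      Fintype.card (MulAction.fixedBy (Equiv.Perm (Fin n)) p) := by
    intro p
    rw [← Nat.card_eq_fintype_card]
    refine Nat.card_congr (Equiv.subtypeEquiv (Equiv.inv (Equiv.Perm (Fin n))) fun σ => ?_)
    rw [MulAction.mem_fixedBy, gamma_smul_def]
    exact conj_iff p.1.1 p.1.2 σ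
  have hfin : (RrsAutotopisms L).Finite := Set.toFinite _
  have h3 : ∑ᶠ p ∈ RrsAutotopisms L, psi p.1 p.2 =
      ∑ p : ↥(GammaSub L), Fintype.card (MulAction.fixedBy (Equiv.Perm (Fin n)) p) := by
    rw [← Set.Finite.coe_toFinset hfin, finsum_mem_coe_finset]
    rw [Finset.sum_subtype hfin.toFinset (fun x => (hfin.mem_toFinset).trans Iff.rfl)
      (fun p => psi p.1 p.2)]
    exact Finset.sum_congr rfl fun p _ => hpsi p
  rw [h1, h2, h3]
  exact burnside.symm
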